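/- Let Ω ⊂ ℝ^m be a nonempty open set with 0 < |Ω| < ∞. Then for all t, δ > 0, H_Ω(t+δ) ≤ (H_Ω(t) + H_Ω(t+2δ))/2 (midpoint convexity of the heat content). -/

import Mathlib

open Real MeasureTheory

set_option maxHeartbeats 1000000

noncomputable def gk (m : ℕ) (t : ℝ) (v : EuclideanSpace ℝ (Fin m)) : ℝ :=
  (4 * π * t) ^ (-(m : ℝ) / 2) * Real.exp (-‖v‖ ^ 2 / (4 * t))

lemma gk_pos {m : ℕ} {t : ℝ} (ht : 0 < t) (v : EuclideanSpace ℝ (Fin m)) :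
    0 < gk m t v := by
  unfold gk
  have : (0:ℝ) < 4 * π * t := by positivity
  positivity

lemma gk_le {m : ℕ} {t : ℝ} (ht : 0 < t) (v : EuclideanSpace ℝ (Fin m)) :
    gk m t v ≤ (4 * π * t) ^ (-(m : ℝ) / 2) := by
  unfold gk
  have h1 : Real.exp (-‖v‖ ^ 2 / (4 * t)) ≤ 1 := by
    apply Real.exp_le_one_iff.2
    rw [neg_div]
    have : (0:ℝ) ≤ ‖v‖ ^ 2 / (4 * t) := by positivity
    linarith
  have h2 : (0:ℝ) < (4 * π * t) ^ (-(m : ℝ) / 2) := by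
    have : (0:ℝ) < 4 * π * t := by positivity
    positivity
  nlinarith

lemma gk_cont {m : ℕ} (t : ℝ) : Continuous (gk m t) := by
  unfold gk
  fun_prop

lemma integrable_gauss {m : ℕ} {b : ℝ} (hb : 0 < b) :
    Integrable (fun v : EuclideanSpace ℝ (Fin m) => Real.exp (-b * ‖v‖ ^ 2)) := by
  have h := (GaussianFourier.integrable_cexp_neg_mul_sq_norm_add (V := EuclideanSpace ℝ (Fin m))
      (b := (b : ℂ)) (by simpa using hb) 0 0).norm
  refine h.congr (Filter.Eventually.of_forall fun v => ?_)
  simp [Complex.norm_exp, ← Complex.ofReal_pow]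

lemma gk_integrable {m : ℕ} {t : ℝ} (ht : 0 < t) :
    Integrable (gk m t) := by
  have hb : (0:ℝ) < 1 / (4 * t) := by positivity
  have := (integrable_gauss (m := m) hb).const_mul ((4 * π * t) ^ (-(m : ℝ) / 2))
  refine this.congr (Filter.Eventually.of_forall fun v => ?_)
  unfold gk
  have harg : -(1 / (4 * t)) * ‖v‖ ^ 2 = -‖v‖ ^ 2 / (4 * t) := by ring
  show (4 * π * t) ^ (-(m:ℝ) / 2) * rexp (-(1 / (4 * t)) * ‖v‖ ^ 2) = _
  rw [harg]

open scoped RealInnerProductSpace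

lemma quad_sq {m : ℕ} {a b : ℝ} (ha : 0 < a) (hb : 0 < b)
    (p q : EuclideanSpace ℝ (Fin m)) :
    ‖p‖ ^ 2 / (4 * a) + ‖q - p‖ ^ 2 / (4 * b)
      = ((a + b) / (4 * (a * b))) * ‖p - (a / (a + b)) • q‖ ^ 2
        + ‖q‖ ^ 2 / (4 * (a + b)) := by
  have hab : (0:ℝ) < a + b := by positivity
  have h1 : ‖q - p‖ ^ 2 = ‖q‖ ^ 2 - 2 * (inner ℝ q p : ℝ) + ‖p‖ ^ 2 := norm_sub_sq_real q p
  have h2 : ‖p - (a / (a + b)) • q‖ ^ 2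
      = ‖p‖ ^ 2 - 2 * ((a / (a + b)) * (inner ℝ p q : ℝ)) + (a / (a + b)) ^ 2 * ‖q‖ ^ 2 := by
    rw [norm_sub_sq_real, real_inner_smul_right, norm_smul, mul_pow, Real.norm_eq_abs, sq_abs]
  rw [h1, h2, real_inner_comm q p]
  field_simp
  ring

lemma gk_conv {m : ℕ} {a b : ℝ} (ha : 0 < a) (hb : 0 < b)
    (x y : EuclideanSpace ℝ (Fin m)) :
    ∫ z, gk m a (x - z) * gk m b (z - y) = gk m (a + b) (x - y) := by
  have hab : (0:ℝ) < a + b := by positivity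
  have hπ : (0:ℝ) < π := Real.pi_pos
  set q := x - y with hq
  set k := (a + b) / (4 * (a * b)) with hk
  have hkpos : 0 < k := by positivity
  set r := (a / (a + b)) • q with hr
  have h1 : ∫ z, gk m a (x - z) * gk m b (z - y)
      = ∫ p, gk m a p * gk m b (q - p) := by
    rw [← integral_sub_left_eq_self (fun p => gk m a p * gk m b (q - p)) volume x]
    have hz : ∀ z : EuclideanSpace ℝ (Fin m), q - (x - z) = z - y := by
      intro z; rw [hq]; abel
    simp only [hz]
  have h2 : ∀ p : EuclideanSpace ℝ (Fin m), gk m a p * gk m b (q - p)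
      = ((4 * π * a) ^ (-(m:ℝ)/2) * (4 * π * b) ^ (-(m:ℝ)/2)
          * Real.exp (-‖q‖ ^ 2 / (4 * (a + b))))
        * Real.exp (-(k * ‖p - r‖ ^ 2)) := by
    intro p
    unfold gk
    have hquad := quad_sq ha hb p q
    have e1 : -‖p‖ ^ 2 / (4 * a) + -‖q - p‖ ^ 2 / (4 * b)
        = -‖q‖ ^ 2 / (4 * (a + b)) + -(k * ‖p - r‖ ^ 2) := by
      rw [hr, hk]
      linear_combination -hquad
    rw [mul_mul_mul_comm, ← Real.exp_add, e1, Real.exp_add]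
    ring
  rw [h1]
  simp only [h2]
  rw [MeasureTheory.integral_const_mul]
  rw [integral_sub_right_eq_self (fun p => Real.exp (-(k * ‖p‖ ^ 2))) r]
  have h3 : ∫ p : EuclideanSpace ℝ (Fin m), Real.exp (-(k * ‖p‖ ^ 2))
      = (π / k) ^ ((m:ℝ) / 2) := by
    have h := GaussianFourier.integral_rexp_neg_mul_sq_norm
      (V := EuclideanSpace ℝ (Fin m)) hkpos
    simp only [neg_mul] at h
    rw [h, finrank_euclideanSpace_fin]
  rw [h3]
  have h4 : (π / k) ^ ((m:ℝ) / 2) = (k / π) ^ (-(m:ℝ) / 2) := by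
    rw [neg_div, Real.rpow_neg (by positivity), ← Real.inv_rpow (by positivity), inv_div]
  have hc : (4 * π * a) ^ (-(m:ℝ)/2) * (4 * π * b) ^ (-(m:ℝ)/2) * (π / k) ^ ((m:ℝ)/2)
      = (4 * π * (a + b)) ^ (-(m:ℝ)/2) := by
    rw [h4, ← Real.mul_rpow (by positivity) (by positivity),
      ← Real.mul_rpow (by positivity) (by positivity)]
    congr 1
    rw [hk]
    field_simp
  unfold gk
  linear_combination (Real.exp (-‖q‖ ^ 2 / (4 * (a + b)))) * hc

open ENNReal

lemma gk_symm {m : ℕ} (t : ℝ) (v w : EuclideanSpace ℝ (Fin m)) :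
    gk m t (v - w) = gk m t (w - v) := by
  unfold gk
  rw [norm_sub_rev]

noncomputable def UU (m : ℕ) (t : ℝ) (Ω : Set (EuclideanSpace ℝ (Fin m)))
    (z : EuclideanSpace ℝ (Fin m)) : ℝ≥0∞ :=
  ∫⁻ x in Ω, ENNReal.ofReal (gk m t (z - x))

lemma gk_meas2 {m : ℕ} (t : ℝ) :
    Measurable fun p : EuclideanSpace ℝ (Fin m) × EuclideanSpace ℝ (Fin m) =>
      ENNReal.ofReal (gk m t (p.1 - p.2)) :=
  ENNReal.measurable_ofReal.comp
    ((gk_cont t).measurable.comp (measurable_fst.sub measurable_snd))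

lemma UU_meas {m : ℕ} (t : ℝ) (Ω : Set (EuclideanSpace ℝ (Fin m))) :
    Measurable (UU m t Ω) :=
  Measurable.lintegral_prod_right' (gk_meas2 t)

lemma UU_lt_top {m : ℕ} {t : ℝ} (ht : 0 < t) {Ω : Set (EuclideanSpace ℝ (Fin m))}
    (hvol : volume Ω < ⊤) (z : EuclideanSpace ℝ (Fin m)) : UU m t Ω z < ⊤ := by
  have h1 : UU m t Ω z ≤ ∫⁻ _ in Ω, ENNReal.ofReal ((4 * π * t) ^ (-(m:ℝ)/2)) :=
    lintegral_mono fun x => ENNReal.ofReal_le_ofReal (gk_le ht _)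
  rw [setLIntegral_const] at h1
  exact h1.trans_lt (ENNReal.mul_lt_top ENNReal.ofReal_lt_top hvol)

lemma lkey {m : ℕ} {a b : ℝ} (ha : 0 < a) (hb : 0 < b)
    {Ω : Set (EuclideanSpace ℝ (Fin m))} (hvol : volume Ω < ⊤) :
    (∫⁻ x in Ω, ∫⁻ y in Ω, ENNReal.ofReal (gk m (a + b) (x - y)))
      = ∫⁻ z, UU m a Ω z * UU m b Ω z := by
  have hint : ∀ x y : EuclideanSpace ℝ (Fin m),
      Integrable (fun z => gk m a (x - z) * gk m b (z - y)) := by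
    intro x y
    have h1 : Integrable (fun z : EuclideanSpace ℝ (Fin m) => gk m b (z - y)) :=
      (gk_integrable hb).comp_sub_right y
    refine h1.bdd_mul (c := (4 * π * a) ^ (-(m:ℝ)/2)) ?_ ?_
    · exact (((gk_cont a).comp (continuous_const.sub continuous_id)).aestronglyMeasurable)
    · refine Filter.Eventually.of_forall fun z => ?_
      rw [Real.norm_eq_abs, abs_of_pos (gk_pos ha _)]
      exact gk_le ha _
  have step1 : ∀ x y : EuclideanSpace ℝ (Fin m),
      ENNReal.ofReal (gk m (a + b) (x - y))
        = ∫⁻ z, ENNReal.ofReal (gk m a (x - z)) * ENNReal.ofReal (gk m b (z - y)) := by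
    intro x y
    rw [← gk_conv ha hb x y, MeasureTheory.ofReal_integral_eq_lintegral_ofReal (hint x y)
      (Filter.Eventually.of_forall fun z => mul_nonneg (gk_pos ha _).le (gk_pos hb _).le)]
    exact lintegral_congr fun z => ENNReal.ofReal_mul (gk_pos ha _).le
  calc
    (∫⁻ x in Ω, ∫⁻ y in Ω, ENNReal.ofReal (gk m (a + b) (x - y)))
        = ∫⁻ x in Ω, ∫⁻ y in Ω, ∫⁻ z,
            ENNReal.ofReal (gk m a (x - z)) * ENNReal.ofReal (gk m b (z - y)) :=
      lintegral_congr fun x => lintegral_congr fun y => step1 x y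
    _ = ∫⁻ x in Ω, ∫⁻ z, ∫⁻ y in Ω,
            ENNReal.ofReal (gk m a (x - z)) * ENNReal.ofReal (gk m b (z - y)) := by
      refine lintegral_congr fun x => ?_
      have hmeas : Measurable (Function.uncurry fun (y z : EuclideanSpace ℝ (Fin m)) =>
          ENNReal.ofReal (gk m a (x - z)) * ENNReal.ofReal (gk m b (z - y))) := by
        apply Measurable.mul
          (f := fun p : EuclideanSpace ℝ (Fin m) × EuclideanSpace ℝ (Fin m) =>
            ENNReal.ofReal (gk m a (x - p.2)))
          (g := fun p => ENNReal.ofReal (gk m b (p.2 - p.1)))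
        · exact ENNReal.measurable_ofReal.comp
            (((gk_cont a).measurable).comp (measurable_const.sub measurable_snd))
        · exact ENNReal.measurable_ofReal.comp
            (((gk_cont b).measurable).comp (measurable_snd.sub measurable_fst))
      exact lintegral_lintegral_swap hmeas.aemeasurable
    _ = ∫⁻ x in Ω, ∫⁻ z, ENNReal.ofReal (gk m a (x - z)) * UU m b Ω z := by
      refine lintegral_congr fun x => lintegral_congr fun z => ?_
      exact lintegral_const_mul' _ _ ENNReal.ofReal_ne_top
    _ = ∫⁻ z, ∫⁻ x in Ω, ENNReal.ofReal (gk m a (x - z)) * UU m b Ω z := by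
      have hmeas : Measurable (Function.uncurry fun (x z : EuclideanSpace ℝ (Fin m)) =>
          ENNReal.ofReal (gk m a (x - z)) * UU m b Ω z) := by
        apply Measurable.mul
        · exact ENNReal.measurable_ofReal.comp
            (((gk_cont a).measurable).comp (measurable_fst.sub measurable_snd))
        · exact (UU_meas b Ω).comp measurable_snd
      exact lintegral_lintegral_swap hmeas.aemeasurable
    _ = ∫⁻ z, (∫⁻ x in Ω, ENNReal.ofReal (gk m a (x - z))) * UU m b Ω z := by
      refine lintegral_congr fun z => ?_
      exact lintegral_mul_const' _ _ (UU_lt_top hb hvol z).ne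
    _ = ∫⁻ z, UU m a Ω z * UU m b Ω z := by
      refine lintegral_congr fun z => ?_
      congr 1
      exact lintegral_congr fun x => by rw [gk_symm]

lemma amgm (x y : ℝ≥0∞) : x * y ≤ (x * x + y * y) / 2 := by
  rw [ENNReal.le_div_iff_mul_le (Or.inl (by simp)) (Or.inl (by simp))]
  rcases eq_or_ne x ⊤ with hx | hx
  · subst hx
    rw [show (⊤:ℝ≥0∞) * ⊤ + y * y = ⊤ by simp]
    exact le_top
  rcases eq_or_ne y ⊤ with hy | hy
  · subst hy
    rw [show x * x + (⊤:ℝ≥0∞) * ⊤ = ⊤ by simp]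
    exact le_top
  lift x to NNReal using hx
  lift y to NNReal using hy
  rw [show ((2:ℝ≥0∞)) = ((2:NNReal):ℝ≥0∞) by norm_cast]
  norm_cast
  rw [← NNReal.coe_le_coe]
  push_cast
  nlinarith [sq_nonneg ((x:ℝ) - (y:ℝ))]

theorem heat_content_midpoint_convex (m : ℕ) (hm : 1 ≤ m)
    (Ω : Set (EuclideanSpace ℝ (Fin m))) (hΩ : IsOpen Ω) (hne : Ω.Nonempty)
    (hpos : 0 < volume Ω) (hvol : volume Ω < ⊤)
    (H : ℝ → ℝ)
    (hH : ∀ t : ℝ, H t = ∫ x in Ω, ∫ y in Ω,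
        (4 * Real.pi * t) ^ (-(m : ℝ) / 2) * Real.exp (-(dist x y) ^ 2 / (4 * t)))
    (t δ : ℝ) (ht : 0 < t) (hδ : 0 < δ) :
    H (t + δ) ≤ (H t + H (t + 2 * δ)) / 2 := by
  have hHs : ∀ s : ℝ, 0 < s →
      H s = (∫⁻ x in Ω, ∫⁻ y in Ω, ENNReal.ofReal (gk m s (x - y))).toReal := by
    intro s hs
    rw [hH s]
    have hgd : ∀ x y : EuclideanSpace ℝ (Fin m),
        (4 * Real.pi * s) ^ (-(m : ℝ) / 2) * Real.exp (-(dist x y) ^ 2 / (4 * s))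
          = gk m s (x - y) := by
      intro x y; unfold gk; rw [dist_eq_norm]
    simp_rw [hgd]
    have hinner : ∀ x : EuclideanSpace ℝ (Fin m), ∫ y in Ω, gk m s (x - y)
        = (∫⁻ y in Ω, ENNReal.ofReal (gk m s (x - y))).toReal := by
      intro x
      have hint : IntegrableOn (fun y => gk m s (x - y)) Ω := by
        refine Integrable.mono' (g := fun _ => (4 * π * s) ^ (-(m:ℝ)/2))
          (integrableOn_const hvol.ne) ?_ ?_
        · exact (((gk_cont s).comp (continuous_const.sub continuous_id)).aestronglyMeasurable)
        · refine Filter.Eventually.of_forall fun y => ?_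
          rw [Real.norm_eq_abs, abs_of_pos (gk_pos hs _)]
          exact gk_le hs _
      rw [← MeasureTheory.ofReal_integral_eq_lintegral_ofReal hint
        (Filter.Eventually.of_forall fun y => (gk_pos hs _).le),
        ENNReal.toReal_ofReal]
      exact integral_nonneg fun y => (gk_pos hs _).le
    simp_rw [hinner]
    exact integral_toReal ((UU_meas s Ω).aemeasurable)
      (Filter.Eventually.of_forall fun x => UU_lt_top hs hvol x)
  have hfin : ∀ s : ℝ, 0 < s →
      (∫⁻ x in Ω, ∫⁻ y in Ω, ENNReal.ofReal (gk m s (x - y))) ≠ ⊤ := by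
    intro s hs
    have h1 : (∫⁻ x in Ω, ∫⁻ y in Ω, ENNReal.ofReal (gk m s (x - y)))
        ≤ ∫⁻ _ in Ω, ENNReal.ofReal ((4 * π * s) ^ (-(m:ℝ)/2)) * volume Ω := by
      refine lintegral_mono fun x => ?_
      calc ∫⁻ y in Ω, ENNReal.ofReal (gk m s (x - y))
          ≤ ∫⁻ _ in Ω, ENNReal.ofReal ((4 * π * s) ^ (-(m:ℝ)/2)) :=
            lintegral_mono fun y => ENNReal.ofReal_le_ofReal (gk_le hs _)
        _ = ENNReal.ofReal ((4 * π * s) ^ (-(m:ℝ)/2)) * volume Ω := setLIntegral_const _ _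
    rw [setLIntegral_const] at h1
    exact (h1.trans_lt (ENNReal.mul_lt_top
      (ENNReal.mul_lt_top ENNReal.ofReal_lt_top hvol) hvol)).ne
  have ha2 : 0 < t / 2 := by linarith
  have hb2 : 0 < t / 2 + δ := by linarith
  have k1 : (∫⁻ x in Ω, ∫⁻ y in Ω, ENNReal.ofReal (gk m (t + δ) (x - y)))
      = ∫⁻ z, UU m (t/2) Ω z * UU m (t/2 + δ) Ω z := by
    have h := lkey ha2 hb2 hvol (m := m) (Ω := Ω)
    rw [show t/2 + (t/2 + δ) = t + δ by ring] at h
    exact h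
  have k2 : (∫⁻ x in Ω, ∫⁻ y in Ω, ENNReal.ofReal (gk m t (x - y)))
      = ∫⁻ z, UU m (t/2) Ω z * UU m (t/2) Ω z := by
    have h := lkey ha2 ha2 hvol (m := m) (Ω := Ω)
    rw [show t/2 + t/2 = t by ring] at h
    exact h
  have k3 : (∫⁻ x in Ω, ∫⁻ y in Ω, ENNReal.ofReal (gk m (t + 2 * δ) (x - y)))
      = ∫⁻ z, UU m (t/2 + δ) Ω z * UU m (t/2 + δ) Ω z := by
    have h := lkey hb2 hb2 hvol (m := m) (Ω := Ω)
    rw [show (t/2 + δ) + (t/2 + δ) = t + 2 * δ by ring] at h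
    exact h
  have hmain : (∫⁻ x in Ω, ∫⁻ y in Ω, ENNReal.ofReal (gk m (t + δ) (x - y)))
      ≤ ((∫⁻ x in Ω, ∫⁻ y in Ω, ENNReal.ofReal (gk m t (x - y)))
          + (∫⁻ x in Ω, ∫⁻ y in Ω, ENNReal.ofReal (gk m (t + 2 * δ) (x - y)))) / 2 := by
    rw [k1, k2, k3]
    calc ∫⁻ z, UU m (t/2) Ω z * UU m (t/2 + δ) Ω z
        ≤ ∫⁻ z, (UU m (t/2) Ω z * UU m (t/2) Ω z
            + UU m (t/2 + δ) Ω z * UU m (t/2 + δ) Ω z) / 2 :=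
          lintegral_mono fun z => amgm _ _
      _ = (∫⁻ z, UU m (t/2) Ω z * UU m (t/2) Ω z
            + UU m (t/2 + δ) Ω z * UU m (t/2 + δ) Ω z) / 2 := by
          simp_rw [div_eq_mul_inv]
          exact lintegral_mul_const' _ _ (by simp)
      _ = ((∫⁻ z, UU m (t/2) Ω z * UU m (t/2) Ω z)
            + ∫⁻ z, UU m (t/2 + δ) Ω z * UU m (t/2 + δ) Ω z) / 2 := by
          rw [lintegral_add_left (f := fun z => UU m (t/2) Ω z * UU m (t/2) Ω z)
            ((UU_meas _ _).mul (UU_meas _ _))]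
  have h2δ : (0:ℝ) < t + 2 * δ := by linarith
  rw [hHs _ (by linarith), hHs _ ht, hHs _ h2δ]
  have hne2 : ((∫⁻ x in Ω, ∫⁻ y in Ω, ENNReal.ofReal (gk m t (x - y)))
      + (∫⁻ x in Ω, ∫⁻ y in Ω, ENNReal.ofReal (gk m (t + 2 * δ) (x - y)))) / 2 ≠ ⊤ := by
    apply (ENNReal.div_lt_top (ENNReal.add_ne_top.2 ⟨hfin t ht, hfin _ h2δ⟩) (by simp)).ne
  calc (∫⁻ x in Ω, ∫⁻ y in Ω, ENNReal.ofReal (gk m (t + δ) (x - y))).toReal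
      ≤ (((∫⁻ x in Ω, ∫⁻ y in Ω, ENNReal.ofReal (gk m t (x - y)))
          + (∫⁻ x in Ω, ∫⁻ y in Ω, ENNReal.ofReal (gk m (t + 2 * δ) (x - y)))) / 2).toReal :=
        ENNReal.toReal_mono hne2 hmain
    _ = ((∫⁻ x in Ω, ∫⁻ y in Ω, ENNReal.ofReal (gk m t (x - y))).toReal
          + (∫⁻ x in Ω, ∫⁻ y in Ω, ENNReal.ofReal (gk m (t + 2 * δ) (x - y))).toReal) / 2 := by
        rw [ENNReal.toReal_div, ENNReal.toReal_add (hfin t ht) (hfin _ h2δ)]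
        norm_num
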